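/- Let n ≥ 1 and σ ∈ S_{2n}. Then every t ∈ O_σ satisfies the lower bound ℓ(t) ≥ m_{23}^σ + m_{24}^σ + m_{43}^σ + m_{44}^σ. -/

import Mathlib

/-- The subgroup `S ⊆ S_{2n}` of permutations fixing each of the last `n` points
(`n+1, …, 2n` in one-based terms, i.e. the indices `i` with `n ≤ i` in zero-based terms). -/
def Sfix (n : ℕ) : Set (Equiv.Perm (Fin (2 * n))) :=
  {g | ∀ i : Fin (2 * n), n ≤ (i : ℕ) → g i = i}

/-- The double coset `O_σ = {g σ h : g, h ∈ S}`. -/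
def dcoset (n : ℕ) (σ : Equiv.Perm (Fin (2 * n))) : Set (Equiv.Perm (Fin (2 * n))) :=
  {t | ∃ g ∈ Sfix n, ∃ h ∈ Sfix n, t = g * σ * h}

/-- The length of a permutation: its number of inversions. -/
noncomputable def len (n : ℕ) (σ : Equiv.Perm (Fin (2 * n))) : ℕ :=
  {p : Fin (2 * n) × Fin (2 * n) | p.1 < p.2 ∧ σ p.2 < σ p.1}.ncard

/-- Membership in the set `N_l^t` (`l ∈ {1,2,3,4}`): `N_1` consists of first-half points sent
to the first half, `N_2` first-half points sent to the second half, `N_3` second-half points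
sent to the first half, and `N_4` second-half points sent to the second half. -/
def inN (n : ℕ) (t : Equiv.Perm (Fin (2 * n))) : ℕ → Fin (2 * n) → Prop
  | 1, i => (i : ℕ) < n ∧ (t i : ℕ) < n
  | 2, i => (i : ℕ) < n ∧ n ≤ (t i : ℕ)
  | 3, i => n ≤ (i : ℕ) ∧ (t i : ℕ) < n
  | 4, i => n ≤ (i : ℕ) ∧ n ≤ (t i : ℕ)
  | _, _ => False

/-- The count `m_{lr}^t = #{(i,j) : i ∈ N_l^t, j ∈ N_r^t, i < j, t(j) < t(i)}`. -/
noncomputable def mcount (n : ℕ) (t : Equiv.Perm (Fin (2 * n))) (l r : ℕ) : ℕ :=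
  {p : Fin (2 * n) × Fin (2 * n) |
    inN n t l p.1 ∧ inN n t r p.2 ∧ p.1 < p.2 ∧ t p.2 < t p.1}.ncard

/-- A member of `Sfix n` maps the first half into the first half. -/
lemma Sfix_lt {n : ℕ} {g : Equiv.Perm (Fin (2 * n))} (hg : g ∈ Sfix n)
    {i : Fin (2 * n)} (hi : (i : ℕ) < n) : (g i : ℕ) < n := by
  by_contra hcon
  push_neg at hcon
  have h1 : g (g i) = g i := hg (g i) hcon
  have h2 : g i = i := g.injective h1
  rw [h2] at hcon
  omega

/-- The inverse of a member of `Sfix n` fixes the second half. -/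
lemma Sfix_inv {n : ℕ} {h : Equiv.Perm (Fin (2 * n))} (hh : h ∈ Sfix n)
    {i : Fin (2 * n)} (hi : n ≤ (i : ℕ)) : h⁻¹ i = i := by
  have := hh i hi
  calc h⁻¹ i = h⁻¹ (h i) := by rw [this]
  _ = i := h.symm_apply_apply i

/-- Every element `t` of the double coset `O_σ` satisfies the lower bound
`ℓ(t) ≥ m_{23}^σ + m_{24}^σ + m_{43}^σ + m_{44}^σ`. -/
theorem length_lower_bound_on_dcoset (n : ℕ) (hn : 1 ≤ n) (σ : Equiv.Perm (Fin (2 * n))) :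
    ∀ t ∈ dcoset n σ,
      mcount n σ 2 3 + mcount n σ 2 4 + mcount n σ 4 3 + mcount n σ 4 4 ≤ len n t := by
  rintro t ⟨g, hg, h, hh, rfl⟩
  -- inverse of h maps first half to first half
  have hhinv_lt : ∀ i : Fin (2 * n), (i : ℕ) < n → ((h⁻¹ i : Fin (2*n)) : ℕ) < n := by
    intro i hi
    by_contra hcon
    push_neg at hcon
    have h1 : h (h⁻¹ i) = h⁻¹ i := hh _ hcon
    rw [show h (h⁻¹ i) = i from h.apply_symm_apply i] at h1
    rw [← h1] at hcon
    omega
  -- The big set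
  set A : Set (Fin (2 * n) × Fin (2 * n)) :=
    {p | n ≤ (σ p.1 : ℕ) ∧ n ≤ (p.2 : ℕ) ∧ p.1 < p.2 ∧ σ p.2 < σ p.1} with hA
  have key : mcount n σ 2 3 + mcount n σ 2 4 + mcount n σ 4 3 + mcount n σ 4 4 = A.ncard := by
    have e23 : mcount n σ 2 3 = {p : Fin (2*n) × Fin (2*n) |
        ((p.1 : ℕ) < n ∧ n ≤ (σ p.1 : ℕ)) ∧ (n ≤ (p.2 : ℕ) ∧ (σ p.2 : ℕ) < n)
          ∧ p.1 < p.2 ∧ σ p.2 < σ p.1}.ncard := by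
      unfold mcount; congr 1
    have e24 : mcount n σ 2 4 = {p : Fin (2*n) × Fin (2*n) |
        ((p.1 : ℕ) < n ∧ n ≤ (σ p.1 : ℕ)) ∧ (n ≤ (p.2 : ℕ) ∧ n ≤ (σ p.2 : ℕ))
          ∧ p.1 < p.2 ∧ σ p.2 < σ p.1}.ncard := by
      unfold mcount; congr 1
    have e43 : mcount n σ 4 3 = {p : Fin (2*n) × Fin (2*n) |
        (n ≤ (p.1 : ℕ) ∧ n ≤ (σ p.1 : ℕ)) ∧ (n ≤ (p.2 : ℕ) ∧ (σ p.2 : ℕ) < n)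
          ∧ p.1 < p.2 ∧ σ p.2 < σ p.1}.ncard := by
      unfold mcount; congr 1
    have e44 : mcount n σ 4 4 = {p : Fin (2*n) × Fin (2*n) |
        (n ≤ (p.1 : ℕ) ∧ n ≤ (σ p.1 : ℕ)) ∧ (n ≤ (p.2 : ℕ) ∧ n ≤ (σ p.2 : ℕ))
          ∧ p.1 < p.2 ∧ σ p.2 < σ p.1}.ncard := by
      unfold mcount; congr 1
    rw [e23, e24, e43, e44]
    set S23 := {p : Fin (2*n) × Fin (2*n) |
        ((p.1 : ℕ) < n ∧ n ≤ (σ p.1 : ℕ)) ∧ (n ≤ (p.2 : ℕ) ∧ (σ p.2 : ℕ) < n)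
          ∧ p.1 < p.2 ∧ σ p.2 < σ p.1}
    set S24 := {p : Fin (2*n) × Fin (2*n) |
        ((p.1 : ℕ) < n ∧ n ≤ (σ p.1 : ℕ)) ∧ (n ≤ (p.2 : ℕ) ∧ n ≤ (σ p.2 : ℕ))
          ∧ p.1 < p.2 ∧ σ p.2 < σ p.1}
    set S43 := {p : Fin (2*n) × Fin (2*n) |
        (n ≤ (p.1 : ℕ) ∧ n ≤ (σ p.1 : ℕ)) ∧ (n ≤ (p.2 : ℕ) ∧ (σ p.2 : ℕ) < n)
          ∧ p.1 < p.2 ∧ σ p.2 < σ p.1}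
    set S44 := {p : Fin (2*n) × Fin (2*n) |
        (n ≤ (p.1 : ℕ) ∧ n ≤ (σ p.1 : ℕ)) ∧ (n ≤ (p.2 : ℕ) ∧ n ≤ (σ p.2 : ℕ))
          ∧ p.1 < p.2 ∧ σ p.2 < σ p.1}
    have hU : A = (S23 ∪ S24) ∪ (S43 ∪ S44) := by
      ext p
      simp only [hA, S23, S24, S43, S44, Set.mem_setOf_eq, Set.mem_union]
      constructor
      · rintro ⟨h1, h2, h3, h4⟩
        rcases lt_or_ge (p.1 : ℕ) n with hi | hi <;> rcases lt_or_ge (σ p.2 : ℕ) n with hj | hj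
        · exact Or.inl (Or.inl ⟨⟨hi, h1⟩, ⟨h2, hj⟩, h3, h4⟩)
        · exact Or.inl (Or.inr ⟨⟨hi, h1⟩, ⟨h2, hj⟩, h3, h4⟩)
        · exact Or.inr (Or.inl ⟨⟨hi, h1⟩, ⟨h2, hj⟩, h3, h4⟩)
        · exact Or.inr (Or.inr ⟨⟨hi, h1⟩, ⟨h2, hj⟩, h3, h4⟩)
      · rintro ((⟨⟨_, h1⟩, ⟨h2, _⟩, h3, h4⟩ | ⟨⟨_, h1⟩, ⟨h2, _⟩, h3, h4⟩) |
          (⟨⟨_, h1⟩, ⟨h2, _⟩, h3, h4⟩ | ⟨⟨_, h1⟩, ⟨h2, _⟩, h3, h4⟩)) <;>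
          exact ⟨h1, h2, h3, h4⟩
    have d1 : Disjoint S23 S24 := by
      rw [Set.disjoint_left]
      rintro p ⟨_, ⟨_, hp⟩, _⟩ ⟨_, ⟨_, hq⟩, _⟩; omega
    have d2 : Disjoint S43 S44 := by
      rw [Set.disjoint_left]
      rintro p ⟨_, ⟨_, hp⟩, _⟩ ⟨_, ⟨_, hq⟩, _⟩; omega
    have d3 : Disjoint (S23 ∪ S24) (S43 ∪ S44) := by
      rw [Set.disjoint_left]
      rintro p (⟨⟨hp, _⟩, _⟩ | ⟨⟨hp, _⟩, _⟩) (⟨⟨hq, _⟩, _⟩ | ⟨⟨hq, _⟩, _⟩) <;> omega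
    rw [hU, Set.ncard_union_eq d3 (Set.toFinite _) (Set.toFinite _),
      Set.ncard_union_eq d1 (Set.toFinite _) (Set.toFinite _),
      Set.ncard_union_eq d2 (Set.toFinite _) (Set.toFinite _)]
    ring
  rw [key]
  unfold len
  apply Set.ncard_le_ncard_of_injOn (fun p => (h⁻¹ p.1, p.2))
  · rintro ⟨i, j⟩ ⟨h1, h2, h3, h4⟩
    simp only [Set.mem_setOf_eq] at *
    have hhj : h j = j := hh j h2
    have htj : (g * σ * h) j = g (σ j) := by
      simp [Equiv.Perm.mul_apply, hhj]
    have hti : (g * σ * h) (h⁻¹ i) = g (σ i) := by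
      simp [Equiv.Perm.mul_apply]
    have hgsi : g (σ i) = σ i := hg (σ i) h1
    constructor
    · -- h⁻¹ i < j
      rcases lt_or_ge (i : ℕ) n with hi | hi
      · have := hhinv_lt i hi
        exact Fin.lt_def.mpr (by omega)
      · rw [Sfix_inv hh hi]; exact h3
    · -- inversion
      rw [htj, hti, hgsi]
      rcases lt_or_ge (σ j : ℕ) n with hj | hj
      · have := Sfix_lt hg hj
        exact Fin.lt_def.mpr (by omega)
      · rw [hg (σ j) hj]; exact h4
  · rintro ⟨i, j⟩ _ ⟨i', j'⟩ _ heq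
    simp only [Prod.mk.injEq] at heq
    obtain ⟨hij, hjj⟩ := heq
    exact Prod.ext (h⁻¹.injective hij) hjj
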